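/- The Poisson bracket of J3 = L1 + L2 + L3 with the cubic function J4 (defined with parameter b ≠ 0) does not vanish identically: there exists a point of ℝ⁶ at which {J3, J4} ≠ 0. -/

import Mathlib

open scoped BigOperators

set_option maxHeartbeats 2000000

/-- Partial derivative of a function on phase space ℝ⁶ in the i-th coordinate. -/
noncomputable def pd (i : Fin 6) (f : (Fin 6 → ℝ) → ℝ) (x : Fin 6 → ℝ) : ℝ :=
  fderiv ℝ f x (Pi.single i 1)

/-- Canonical Poisson bracket on ℝ⁶ with coordinates (q1,q2,q3,p1,p2,p3). -/
noncomputable def pb (F G : (Fin 6 → ℝ) → ℝ) (x : Fin 6 → ℝ) : ℝ :=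
  (pd 0 F x * pd 3 G x - pd 3 F x * pd 0 G x) +
  (pd 1 F x * pd 4 G x - pd 4 F x * pd 1 G x) +
  (pd 2 F x * pd 5 G x - pd 5 F x * pd 2 G x)

/-- Angular momentum components: L1 = q2 p3 − q3 p2, etc. -/
def L1 (x : Fin 6 → ℝ) : ℝ := x 1 * x 5 - x 2 * x 4
def L2 (x : Fin 6 → ℝ) : ℝ := x 2 * x 3 - x 0 * x 5
def L3 (x : Fin 6 → ℝ) : ℝ := x 0 * x 4 - x 1 * x 3

/-- The Hamiltonian of the coupled oscillators with magnetic terms. -/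
noncomputable def Ham (b k : ℝ) (x : Fin 6 → ℝ) : ℝ :=
  (1/2) * (x 3 ^ 2 + x 4 ^ 2 + x 5 ^ 2) + b * (L1 x + L2 x + L3 x) +
  (1/2) * (b ^ 2 + k) * ((x 1 - x 0) ^ 2 + (x 2 - x 1) ^ 2 + (x 0 - x 2) ^ 2)

/-- J2 = p1 + p2 + p3. -/
def J2 (x : Fin 6 → ℝ) : ℝ := x 3 + x 4 + x 5

/-- J3 = L1 + L2 + L3. -/
def J3 (x : Fin 6 → ℝ) : ℝ := L1 x + L2 x + L3 x

/-- z1 = 4(q21² + q13²) + q32², and cyclic. -/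
def z1 (x : Fin 6 → ℝ) : ℝ := 4 * ((x 1 - x 0)^2 + (x 0 - x 2)^2) + (x 2 - x 1)^2
def z2 (x : Fin 6 → ℝ) : ℝ := 4 * ((x 2 - x 1)^2 + (x 1 - x 0)^2) + (x 0 - x 2)^2
def z3 (x : Fin 6 → ℝ) : ℝ := 4 * ((x 0 - x 2)^2 + (x 2 - x 1)^2) + (x 1 - x 0)^2

/-- The cubic function J4. -/
noncomputable def J4c (b : ℝ) (x : Fin 6 → ℝ) : ℝ :=
  (1/3) * (x 3 ^ 3 + x 4 ^ 3 + x 5 ^ 3)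
  - b * ((x 2 - x 1) * x 3 ^ 2 + (x 0 - x 2) * x 4 ^ 2 + (x 1 - x 0) * x 5 ^ 2)
  + b^2 * (z1 x * x 3 + z2 x * x 4 + z3 x * x 5)
  + 9 * b^3 * ((x 1 - x 0)^3 + (x 0 - x 2)^3 + (x 2 - x 1)^3)

/-- For b ≠ 0, {J3, J4} does not vanish identically. -/
theorem stmt18 (b : ℝ) (hb : b ≠ 0) :
    ∃ x : Fin 6 → ℝ, pb J3 (J4c b) x ≠ 0 := by
  set x : Fin 6 → ℝ := ![0,0,0,2,1,0] with hx
  refine ⟨x, ?_⟩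
  have v0 : x 0 = 0 := rfl
  have v1 : x 1 = 0 := rfl
  have v2 : x 2 = 0 := rfl
  have v3 : x 3 = 2 := rfl
  have v4 : x 4 = 1 := rfl
  have v5 : x 5 = 0 := rfl
  have a : ∀ j : Fin 6, HasFDerivAt (fun y : Fin 6 → ℝ => y j)
      ((ContinuousLinearMap.proj j : (Fin 6 → ℝ) →L[ℝ] ℝ)) x :=
    fun j => hasFDerivAt_apply j _
  have d : ∀ j k : Fin 6, HasFDerivAt (fun y : Fin 6 → ℝ => y j - y k) _ x :=
    fun j k => (a j).sub (a k)
  have T1 : HasFDerivAt (fun y : Fin 6 → ℝ =>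
      (1/3) * (y 3 * y 3 * y 3 + y 4 * y 4 * y 4 + y 5 * y 5 * y 5)) _ x :=
    (((((a 3).mul (a 3)).mul (a 3)).add (((a 4).mul (a 4)).mul (a 4))).add
      (((a 5).mul (a 5)).mul (a 5))).const_mul (1/3)
  have T2 : HasFDerivAt (fun y : Fin 6 → ℝ =>
      b * ((y 2 - y 1) * (y 3 * y 3) + (y 0 - y 2) * (y 4 * y 4) + (y 1 - y 0) * (y 5 * y 5))) _ x :=
    ((((d 2 1).mul ((a 3).mul (a 3))).add ((d 0 2).mul ((a 4).mul (a 4)))).add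
      ((d 1 0).mul ((a 5).mul (a 5)))).const_mul b
  have hz1 : HasFDerivAt (fun y : Fin 6 → ℝ =>
      4 * ((y 1 - y 0) * (y 1 - y 0) + (y 0 - y 2) * (y 0 - y 2)) + (y 2 - y 1) * (y 2 - y 1)) _ x :=
    ((((d 1 0).mul (d 1 0)).add ((d 0 2).mul (d 0 2))).const_mul 4).add ((d 2 1).mul (d 2 1))
  have hz2 : HasFDerivAt (fun y : Fin 6 → ℝ =>
      4 * ((y 2 - y 1) * (y 2 - y 1) + (y 1 - y 0) * (y 1 - y 0)) + (y 0 - y 2) * (y 0 - y 2)) _ x :=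
    ((((d 2 1).mul (d 2 1)).add ((d 1 0).mul (d 1 0))).const_mul 4).add ((d 0 2).mul (d 0 2))
  have hz3 : HasFDerivAt (fun y : Fin 6 → ℝ =>
      4 * ((y 0 - y 2) * (y 0 - y 2) + (y 2 - y 1) * (y 2 - y 1)) + (y 1 - y 0) * (y 1 - y 0)) _ x :=
    ((((d 0 2).mul (d 0 2)).add ((d 2 1).mul (d 2 1))).const_mul 4).add ((d 1 0).mul (d 1 0))
  have T3 : HasFDerivAt (fun y : Fin 6 → ℝ => b^2 *
      ((4 * ((y 1 - y 0) * (y 1 - y 0) + (y 0 - y 2) * (y 0 - y 2)) + (y 2 - y 1) * (y 2 - y 1)) * y 3 +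
       (4 * ((y 2 - y 1) * (y 2 - y 1) + (y 1 - y 0) * (y 1 - y 0)) + (y 0 - y 2) * (y 0 - y 2)) * y 4 +
       (4 * ((y 0 - y 2) * (y 0 - y 2) + (y 2 - y 1) * (y 2 - y 1)) + (y 1 - y 0) * (y 1 - y 0)) * y 5)) _ x :=
    (((hz1.mul (a 3)).add (hz2.mul (a 4))).add (hz3.mul (a 5))).const_mul (b^2)
  have T4 : HasFDerivAt (fun y : Fin 6 → ℝ => 9 * b^3 *
      ((y 1 - y 0) * (y 1 - y 0) * (y 1 - y 0) + (y 0 - y 2) * (y 0 - y 2) * (y 0 - y 2) +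
       (y 2 - y 1) * (y 2 - y 1) * (y 2 - y 1))) _ x :=
    (((((d 1 0).mul (d 1 0)).mul (d 1 0)).add (((d 0 2).mul (d 0 2)).mul (d 0 2))).add
      ((((d 2 1).mul (d 2 1)).mul (d 2 1)))).const_mul (9*b^3)
  have h4 : HasFDerivAt (J4c b) _ x :=
    (((T1.sub T2).add T3).add T4).congr_of_eventuallyEq
      (Filter.Eventually.of_forall fun y => by unfold J4c z1 z2 z3; simp only [Pi.mul_apply, Pi.add_apply, Pi.sub_apply]; ring)
  have h3 : HasFDerivAt J3 _ x :=
    ((((((a 1).mul (a 5)).sub ((a 2).mul (a 4))).add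
      (((a 2).mul (a 3)).sub ((a 0).mul (a 5)))).add
      (((a 0).mul (a 4)).sub ((a 1).mul (a 3))))).congr_of_eventuallyEq
      (Filter.Eventually.of_forall fun y => by unfold J3 L1 L2 L3; simp only [Pi.mul_apply, Pi.add_apply, Pi.sub_apply])
  have e4 := h4.fderiv
  have e3 := h3.fderiv
  have p0 : pd 0 J3 x = 1 := by rw [pd, e3]; simp [Pi.single_apply, v0, v1, v2, v3, v4, v5]; try norm_num
  have p1 : pd 1 J3 x = -2 := by rw [pd, e3]; simp [Pi.single_apply, v0, v1, v2, v3, v4, v5]; try norm_num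
  have p2 : pd 2 J3 x = 1 := by rw [pd, e3]; simp [Pi.single_apply, v0, v1, v2, v3, v4, v5]; try norm_num
  have q3 : pd 3 J3 x = 0 := by rw [pd, e3]; simp [Pi.single_apply, v0, v1, v2, v3, v4, v5]; try norm_num
  have q4 : pd 4 J3 x = 0 := by rw [pd, e3]; simp [Pi.single_apply, v0, v1, v2, v3, v4, v5]; try norm_num
  have q5 : pd 5 J3 x = 0 := by rw [pd, e3]; simp [Pi.single_apply, v0, v1, v2, v3, v4, v5]; try norm_num
  have r3 : pd 3 (J4c b) x = 4 := by rw [pd, e4]; simp [Pi.single_apply, v0, v1, v2, v3, v4, v5]; try norm_num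
  have r4 : pd 4 (J4c b) x = 1 := by rw [pd, e4]; simp [Pi.single_apply, v0, v1, v2, v3, v4, v5]; try norm_num
  have r5 : pd 5 (J4c b) x = 0 := by rw [pd, e4]; simp [Pi.single_apply, v0, v1, v2, v3, v4, v5]; try norm_num
  rw [pb, p0, p1, p2, q3, q4, q5, r3, r4, r5]
  norm_num
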